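/- Let G be a group and H a subgroup of G. Then H is characteristic in G if and only if there exist a functor F : Core Grp ⥤ Grp and a natural transformation τ : Core.inclusion ⟶ F (from the inclusion functor Core Grp ⥤ Grp to F) such that H equals the kernel of the underlying group homomorphism of the component τ.app G : G ⟶ F.obj G. -/

import Mathlib

open CategoryTheory

section Aux

variable (G : GrpCat) (H : Subgroup G) [H.Normal]

/-- The candidate characteristic subgroup in an arbitrary group `K`. -/
def charSub (K : GrpCat) : Subgroup K :=
  ⨅ φ : (G : Type _) ≃* K, H.comap φ.symm.toMonoidHom

instance charSub_normal (K : GrpCat) : (charSub G H K).Normal := by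
  constructor
  intro n hn g
  rw [charSub, Subgroup.mem_iInf] at hn ⊢
  intro φ
  exact ((‹H.Normal›).comap φ.symm.toMonoidHom).conj_mem n (hn φ) g

omit [H.Normal] in
lemma charSub_le {K L : GrpCat} (f : (K : Type _) ≃* L) :
    charSub G H K ≤ (charSub G H L).comap f.toMonoidHom := by
  intro x hx
  rw [charSub, Subgroup.mem_iInf] at hx
  rw [Subgroup.mem_comap, charSub, Subgroup.mem_iInf]
  intro ψ
  have := hx (ψ.trans f.symm)
  simpa using this

/-- The functor sending `K` to `K ⧸ charSub G H K`. -/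
def charFunctor : Core GrpCat ⥤ GrpCat where
  obj K := GrpCat.of (↥K.of ⧸ charSub G H K.of)
  map {K L} f :=
    GrpCat.ofHom (QuotientGroup.map _ _ f.iso.hom.hom (charSub_le G H f.iso.groupIsoToMulEquiv))
  map_id K := by
    ext x
    rfl
  map_comp {K L M} f g := by
    ext x
    rfl

/-- The natural projection. -/
def charTrans : Core.inclusion GrpCat ⟶ charFunctor G H where
  app K := GrpCat.ofHom (QuotientGroup.mk' (charSub G H K.of))
  naturality K L f := by
    ext x
    rfl

end Aux

theorem characteristic_iff_unital_kernel (G : GrpCat) (H : Subgroup G) :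
    H.Characteristic ↔
      ∃ (F : Core GrpCat ⥤ GrpCat) (τ : Core.inclusion GrpCat ⟶ F),
        H = MonoidHom.ker (τ.app (show Core GrpCat from ⟨G⟩)).hom := by
  constructor
  · intro hchar
    refine ⟨charFunctor G H, charTrans G H, ?_⟩
    have : MonoidHom.ker ((charTrans G H).app (show Core GrpCat from ⟨G⟩)).hom
        = charSub G H G := QuotientGroup.ker_mk' (N := charSub G H G)
    rw [this]
    apply le_antisymm
    · intro x hx
      rw [charSub, Subgroup.mem_iInf]
      intro φ
      rw [(Subgroup.characteristic_iff_comap_eq.mp hchar) φ.symm]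
      exact hx
    · intro x hx
      rw [charSub, Subgroup.mem_iInf] at hx
      have := hx (MulEquiv.refl G)
      simpa using this
  · rintro ⟨F, τ, rfl⟩
    apply Subgroup.characteristic_iff_comap_eq.mpr
    intro φ
    set f : (show Core GrpCat from ⟨G⟩) ⟶ (show Core GrpCat from ⟨G⟩) := ⟨φ.toGrpIso⟩ with hf
    set e := (asIso (F.map f)).groupIsoToMulEquiv with he
    have hx : ∀ x : ↑G, (τ.app ⟨G⟩).hom (φ.toMonoidHom x)
        = e ((τ.app ⟨G⟩).hom x) := by
      intro x
      have := congrArg (fun k => k.hom x) (τ.naturality f)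
      exact this
    ext x
    simp only [Subgroup.mem_comap, MonoidHom.mem_ker]
    constructor
    · intro h
      exact e.map_eq_one_iff.mp ((hx x).symm.trans h)
    · intro h
      exact (hx x).trans (e.map_eq_one_iff.mpr h)
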